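/- For a, b > 0, ∫₀^∞ erf(ax)·e^{−b²x²} dx = (π/2 − arctan(b/a)) / (b√π). -/

import Mathlib

open MeasureTheory Real Set

/-- The Gauss error function `erf x = (2/√π) ∫₀ˣ e^{−t²} dt`. -/
noncomputable def erf (x : ℝ) : ℝ :=
  (2 / Real.sqrt Real.pi) * ∫ t in (0:ℝ)..x, Real.exp (-(t^2))

lemma integral_x_exp_aux {c : ℝ} (hc : 0 < c) :
    ∫ x in Ioi (0:ℝ), x * Real.exp (-c * x^2) = 1/(2*c) := by
  have A : ∀ x : ℝ, HasDerivAt (fun x : ℝ => -(2*c)⁻¹ * Real.exp (-c * x^2))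
      (x * Real.exp (-c * x^2)) x := by
    intro x
    refine (((hasDerivAt_pow 2 x).const_mul (-c)).exp.const_mul (-(2*c)⁻¹)).congr_deriv ?_
    field_simp
    ring
  have B : Filter.Tendsto (fun y : ℝ => -(2*c)⁻¹ * Real.exp (-c * y^2)) Filter.atTop
      (nhds (-(2*c)⁻¹ * 0)) := by
    refine Filter.Tendsto.const_mul _ ?_
    apply Real.tendsto_exp_atBot.comp
    exact (Filter.tendsto_pow_atTop two_ne_zero).const_mul_atTop_of_neg (neg_lt_zero.2 hc)
  have := integral_Ioi_of_hasDerivAt_of_tendsto' (a := (0:ℝ)) (fun x _ => A x)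
    (integrable_mul_exp_neg_mul_sq hc).integrableOn B
  rw [this]
  norm_num

lemma integral_arctan_aux {a b : ℝ} (ha : 0 < a) (hb : 0 < b) :
    ∫ s in (0:ℝ)..1, a / (a^2*s^2 + b^2) = Real.arctan (a/b) / b := by
  have hden : ∀ s : ℝ, a^2*s^2 + b^2 ≠ 0 := fun s => by positivity
  have A : ∀ s : ℝ, HasDerivAt (fun s : ℝ => (1/b) * Real.arctan (a*s/b))
      (a / (a^2*s^2 + b^2)) s := by
    intro s
    have h1 : HasDerivAt (fun s : ℝ => a*s/b) (a/b) s := by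
      simpa using ((hasDerivAt_id s).const_mul a).div_const b
    have := (Real.hasDerivAt_arctan (a*s/b)).comp s h1
    refine (this.const_mul (1/b)).congr_deriv ?_
    field_simp
    ring
  have hcont : Continuous fun s : ℝ => a / (a^2*s^2 + b^2) :=
    continuous_const.div (by continuity) hden
  rw [intervalIntegral.integral_eq_sub_of_hasDerivAt (fun s _ => A s)
    (hcont.intervalIntegrable 0 1)]
  simp [mul_comm, div_eq_mul_inv, mul_comm]

/-- The integral identity `∫₀^∞ erf(ax) e^{−b²x²} dx = (π/2 − arctan(b/a))/(b√π)`
for `a, b > 0`. -/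
theorem integral_erf_mul_gaussian
    (a b : ℝ) (ha : 0 < a) (hb : 0 < b) :
    ∫ x in Ioi (0:ℝ), erf (a * x) * Real.exp (-(b^2) * x^2)
      = (Real.pi / 2 - Real.arctan (b / a)) / (b * Real.sqrt Real.pi) := by
  have hb2 : (0:ℝ) < b^2 := by positivity
  -- Step 1: pointwise rewriting of the integrand as an integral over `s ∈ (0,1]`.
  have key : ∀ x : ℝ, erf (a * x) * Real.exp (-(b^2) * x^2)
      = ∫ s in Ioc (0:ℝ) 1, (2 / Real.sqrt Real.pi) * a *
          (x * Real.exp (-(a^2*s^2 + b^2) * x^2)) := by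
    intro x
    rw [← intervalIntegral.integral_of_le zero_le_one, erf]
    have h1 : (∫ t in (0:ℝ)..(a*x), Real.exp (-(t^2)))
        = a * ∫ u in (0:ℝ)..x, Real.exp (-((a*u)^2)) := by
      have := intervalIntegral.smul_integral_comp_mul_left (a := (0:ℝ)) (b := x)
        (fun t => Real.exp (-(t^2))) a
      simp only [smul_eq_mul, mul_zero, mul_one] at this
      rw [← this]
    have h2 : (∫ u in (0:ℝ)..x, Real.exp (-((a*u)^2)))
        = x * ∫ s in (0:ℝ)..1, Real.exp (-((a*(x*s))^2)) := by
      have := intervalIntegral.smul_integral_comp_mul_left (a := (0:ℝ)) (b := 1)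
        (fun u => Real.exp (-((a*u)^2))) x
      simp only [smul_eq_mul, mul_zero, mul_one] at this
      rw [← this]
    rw [h1, h2]
    have h3 : ∀ s : ℝ, Real.exp (-(a^2*s^2 + b^2) * x^2)
        = Real.exp (-((a*(x*s))^2)) * Real.exp (-(b^2) * x^2) := by
      intro s
      rw [← Real.exp_add]
      congr 1
      ring
    simp only [h3, intervalIntegral.integral_const_mul, intervalIntegral.integral_mul_const]
    ring
  simp only [key]
  -- Step 2: Fubini.
  have hcont : Continuous (fun p : ℝ × ℝ => (2 / Real.sqrt Real.pi) * a *
      (p.1 * Real.exp (-(a^2*p.2^2 + b^2) * p.1^2))) := by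
    continuity
  have hInt : Integrable (fun p : ℝ × ℝ => (2 / Real.sqrt Real.pi) * a *
        (p.1 * Real.exp (-(a^2*p.2^2 + b^2) * p.1^2)))
      ((volume.restrict (Ioi (0:ℝ))).prod (volume.restrict (Ioc (0:ℝ) 1))) := by
    rw [integrable_prod_iff hcont.aestronglyMeasurable]
    constructor
    · refine Filter.Eventually.of_forall fun x => ?_
      exact ((hcont.comp (Continuous.prodMk_right x)).integrableOn_Ioc)
    · apply Integrable.mono' (g := fun x : ℝ => (2 / Real.sqrt Real.pi) * a *
        (x * Real.exp (-(b^2) * x^2)))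
      · exact ((integrable_mul_exp_neg_mul_sq hb2).const_mul _).integrableOn
      · exact (hcont.norm.stronglyMeasurable.integral_prod_right').aestronglyMeasurable
      · rw [ae_restrict_iff' measurableSet_Ioi]
        refine Filter.Eventually.of_forall fun x hx => ?_
        have hx' : (0:ℝ) < x := hx
        have hC : ∀ s ∈ Ioc (0:ℝ) 1,
            ‖‖(2 / Real.sqrt Real.pi) * a * (x * Real.exp (-(a^2*s^2 + b^2) * x^2))‖‖
              ≤ (2 / Real.sqrt Real.pi) * a * (x * Real.exp (-(b^2) * x^2)) := by
          intro s _
          rw [norm_norm, Real.norm_eq_abs, abs_of_nonneg (by positivity)]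
          have hx0 : (0:ℝ) ≤ x := le_of_lt hx
          have : Real.exp (-(a^2*s^2 + b^2) * x^2) ≤ Real.exp (-(b^2) * x^2) := by
            apply Real.exp_le_exp.2
            nlinarith [sq_nonneg (a*s*x), sq_nonneg x]
          exact mul_le_mul_of_nonneg_left
            (mul_le_mul_of_nonneg_left this hx0) (by positivity)
        have := norm_setIntegral_le_of_norm_le_const (μ := volume)
          (s := Ioc (0:ℝ) 1) (by simp) hC
        calc ‖∫ s in Ioc (0:ℝ) 1,
              ‖(2 / Real.sqrt Real.pi) * a * (x * Real.exp (-(a^2*s^2 + b^2) * x^2))‖‖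
            ≤ (2 / Real.sqrt Real.pi) * a * (x * Real.exp (-(b^2) * x^2))
                * (volume (Ioc (0:ℝ) 1)).toReal := this
          _ = (2 / Real.sqrt Real.pi) * a * (x * Real.exp (-(b^2) * x^2)) := by simp
  rw [MeasureTheory.integral_integral_swap hInt]
  -- Step 3: compute the inner Gaussian integral.
  have inner : ∀ s : ℝ, (∫ x in Ioi (0:ℝ), (2 / Real.sqrt Real.pi) * a *
      (x * Real.exp (-(a^2*s^2 + b^2) * x^2)))
      = (1 / Real.sqrt Real.pi) * (a / (a^2*s^2 + b^2)) := by
    intro s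
    rw [MeasureTheory.integral_const_mul, integral_x_exp_aux (by positivity)]
    have h : a^2*s^2 + b^2 ≠ 0 := by positivity
    have hπ : Real.sqrt Real.pi ≠ 0 := ne_of_gt (Real.sqrt_pos.2 Real.pi_pos)
    field_simp
  simp only [inner]
  rw [MeasureTheory.integral_const_mul, ← intervalIntegral.integral_of_le zero_le_one,
    integral_arctan_aux ha hb]
  -- Step 4: final arithmetic.
  have harc : Real.arctan (a/b) = Real.pi/2 - Real.arctan (b/a) := by
    rw [← inv_div b a, Real.arctan_inv_of_pos (div_pos hb ha)]
  rw [harc]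
  have hπ : Real.sqrt Real.pi ≠ 0 := ne_of_gt (Real.sqrt_pos.2 Real.pi_pos)
  field_simp
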